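/- In the multi-variable Sl(2)-orbit setting: let L ∈ ℝ and let r ∈ ℝ^m satisfy r_i ≥ 1 for all i. If v ∈ Λ is self-dual at r and satisfies the tadpole bound L at r, then ‖P_ℓ v‖² ≤ L²/λ² for every weight ℓ ∈ ℤ^m. (The uniform bound on all sl(2)-weight components of a self-dual flux, combining Steps 2 and 3a of the proof of Theorem 4 in the Sl(2)-orbit approximation.) -/

import Mathlib

/-- Multi-variable Sl(2)-orbit setting: a flux `v ∈ Λ` that is self-dual at
growth-sector coordinates `r` (all `r i ≥ 1`) and satisfies the tadpole bound `L` at `r`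
has all of its sl(2)-weight components uniformly bounded: `‖P_ℓ v‖² ≤ L² / λ²`. -/
theorem selfdual_weight_components_uniformly_bounded
    (V : Type*) [NormedAddCommGroup V] [InnerProductSpace ℝ V] [FiniteDimensional ℝ V]
    (m : ℕ)
    -- the orthogonal weight decomposition V = ⊕_{ℓ ∈ ℤ^m} V_ℓ, via its projections P ℓ
    (P : (Fin m → ℤ) → (V →ₗ[ℝ] V))
    (hPfin : (Function.support P).Finite)
    (hPsum : ∀ v : V, ∑ᶠ ℓ : Fin m → ℤ, P ℓ v = v)
    (hPproj : ∀ (ℓ : Fin m → ℤ) (v : V), P ℓ (P ℓ v) = P ℓ v)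
    (hPorth : ∀ ℓ ℓ' : Fin m → ℤ, ℓ ≠ ℓ' → ∀ u w : V, (inner ℝ (P ℓ u) (P ℓ' w) : ℝ) = 0)
    -- the boundary Weil operator C, a linear isometry with C(V_ℓ) = V_{-ℓ}
    (C : V →ₗ[ℝ] V)
    (hCiso : ∀ v : V, ‖C v‖ = ‖v‖)
    (hCw : ∀ ℓ : Fin m → ℤ,
      Submodule.map C (LinearMap.range (P ℓ)) = LinearMap.range (P (-ℓ)))
    -- the flux lattice Λ and the integrality gap λ
    (Λ : AddSubgroup V)
    (lam : ℝ) (hlam : 0 < lam)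
    (hgap : ∀ v ∈ Λ, ∀ ℓ : Fin m → ℤ, P ℓ v = 0 ∨ lam ≤ ‖P ℓ v‖)
    -- the hypotheses of the statement
    (L : ℝ) (r : Fin m → ℝ) (hr : ∀ i, 1 ≤ r i)
    (v : V) (hv : v ∈ Λ)
    (hsd : ∀ ℓ : Fin m → ℤ, (∏ i, r i ^ ℓ i) • P ℓ v = C (P (-ℓ) v))
    (htad : ∑ᶠ ℓ : Fin m → ℤ, (∏ i, r i ^ ℓ i) * ‖P ℓ v‖ ^ 2 ≤ L) :
    ∀ ℓ : Fin m → ℤ, ‖P ℓ v‖ ^ 2 ≤ L ^ 2 / lam ^ 2 := by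
  intro ℓ
  have hrpos : ∀ i, (0:ℝ) < r i := fun i => lt_of_lt_of_le one_pos (hr i)
  set w : (Fin m → ℤ) → ℝ := fun ℓ => ∏ i, r i ^ ℓ i with hwdef
  have hwpos : ∀ ℓ, 0 < w ℓ := fun ℓ =>
    Finset.prod_pos fun i _ => zpow_pos (hrpos i) _
  have hwinv : ∀ ℓ, w (-ℓ) = (w ℓ)⁻¹ := by
    intro ℓ
    simp only [hwdef, ← Finset.prod_inv_distrib]
    refine Finset.prod_congr rfl fun i _ => ?_
    rw [Pi.neg_apply, zpow_neg]
  have hnorm : ∀ ℓ, w ℓ * ‖P ℓ v‖ = ‖P (-ℓ) v‖ := by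
    intro ℓ
    have h := congrArg norm (hsd ℓ)
    rwa [norm_smul, hCiso, Real.norm_eq_abs, abs_of_pos (hwpos ℓ)] at h
  -- each term of the tadpole sum is nonnegative and bounded by L
  set f : (Fin m → ℤ) → ℝ := fun ℓ => w ℓ * ‖P ℓ v‖ ^ 2 with hfdef
  have hfnn : ∀ ℓ, 0 ≤ f ℓ := fun ℓ => mul_nonneg (hwpos ℓ).le (by positivity)
  have hffin : (Function.support f).Finite := by
    refine hPfin.subset fun ℓ hℓ => ?_
    simp only [Function.mem_support] at hℓ ⊢
    intro h
    exact hℓ (by simp [hfdef, h])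
  have hterm : ∀ ℓ, f ℓ ≤ L := fun ℓ =>
    le_trans (single_le_finsum ℓ hffin hfnn) htad
  rcases hgap v hv ℓ with h0 | hlaml
  · have h : (0:ℝ) ≤ L ^ 2 / lam ^ 2 := by positivity
    simpa [h0] using h
  -- P ℓ v ≠ 0, hence P (-ℓ) v ≠ 0 and both have norm ≥ lam
  have hne : (0:ℝ) < ‖P (-ℓ) v‖ := by
    rw [← hnorm ℓ]
    exact mul_pos (hwpos ℓ) (lt_of_lt_of_le hlam hlaml)
  have hlamn : lam ≤ ‖P (-ℓ) v‖ := by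
    rcases hgap v hv (-ℓ) with h0 | h
    · rw [h0] at hne; simp at hne
    · exact h
  have hL : 0 ≤ L := le_trans (hfnn ℓ) (hterm ℓ)
  have key : ‖P ℓ v‖ ^ 2 * lam ^ 2 ≤ L ^ 2 := by
    have h1 : ‖P ℓ v‖ ^ 2 * lam ^ 2 ≤ ‖P ℓ v‖ ^ 2 * ‖P (-ℓ) v‖ ^ 2 :=
      mul_le_mul_of_nonneg_left (pow_le_pow_left₀ hlam.le hlamn 2) (by positivity)
    have h2 : ‖P ℓ v‖ ^ 2 * ‖P (-ℓ) v‖ ^ 2 = f ℓ * f (-ℓ) := by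
      simp only [hfdef, hwinv]
      field_simp [(hwpos ℓ).ne']
    have h3 : f ℓ * f (-ℓ) ≤ L * L :=
      mul_le_mul (hterm ℓ) (hterm (-ℓ)) (hfnn (-ℓ)) hL
    calc ‖P ℓ v‖ ^ 2 * lam ^ 2 ≤ ‖P ℓ v‖ ^ 2 * ‖P (-ℓ) v‖ ^ 2 := h1
      _ = f ℓ * f (-ℓ) := h2
      _ ≤ L * L := h3
      _ = L ^ 2 := (sq L).symm
  rw [le_div_iff₀ (by positivity : (0:ℝ) < lam ^ 2)]
  exact key
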